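/- Let G be a (P5, chair)-free graph containing an induced 5-cycle C = v1...v5. Every vertex of V(G)∖(S²₃(i) ∪ S₄(i) ∪ S₅) that has a neighbor on C is either complete or anticomplete to S²₃(i). -/

import Mathlib

open SimpleGraph

/-- The chair: a `P₄` (0-1-2-3) with an extra vertex 4 adjacent to the middle vertex 2. -/
def chair : SimpleGraph (Fin 5) :=
  SimpleGraph.fromRel (fun a b => (a, b) ∈ [((0 : Fin 5), (1 : Fin 5)), (1, 2), (2, 3), (2, 4)])

/-- The cycle on five vertices. -/
def cycle5 : SimpleGraph (Fin 5) :=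
  SimpleGraph.fromRel (fun a b => b = a + 1)

/-- `G` contains an induced copy of `H`. -/
def HasInducedCopy {α V : Type*} (H : SimpleGraph α) (G : SimpleGraph V) : Prop :=
  ∃ f : α → V, Function.Injective f ∧ ∀ a b, G.Adj (f a) (f b) ↔ H.Adj a b

/-- `G` is `k`-vertex-critical. -/
def IsVertexCritical {V : Type*} (G : SimpleGraph V) (k : ℕ) : Prop :=
  G.chromaticNumber = k ∧ ∀ x : V, (G.induce {x}ᶜ).chromaticNumber < k

/-- `v : Fin 5 → V` is an induced five-cycle in `G`. -/
def IsInducedC5 {V : Type*} (G : SimpleGraph V) (v : Fin 5 → V) : Prop :=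
  Function.Injective v ∧ ∀ i j, G.Adj (v i) (v j) ↔ cycle5.Adj i j

/-- Vertices outside `C` whose neighbourhood on `C` is `{v (i-1), v i, v (i+1)}`. -/
def S13 {V : Type*} (G : SimpleGraph V) (v : Fin 5 → V) (i : Fin 5) : Set V :=
  {x | x ∉ Set.range v ∧ ∀ j, G.Adj x (v j) ↔ (j = i - 1 ∨ j = i ∨ j = i + 1)}

/-- Vertices outside `C` whose neighbourhood on `C` is `{v (i-2), v i, v (i+2)}`. -/
def S23 {V : Type*} (G : SimpleGraph V) (v : Fin 5 → V) (i : Fin 5) : Set V :=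
  {x | x ∉ Set.range v ∧ ∀ j, G.Adj x (v j) ↔ (j = i - 2 ∨ j = i ∨ j = i + 2)}

/-- Vertices outside `C` whose neighbourhood on `C` is all of `C` except `v i`. -/
def S4 {V : Type*} (G : SimpleGraph V) (v : Fin 5 → V) (i : Fin 5) : Set V :=
  {x | x ∉ Set.range v ∧ ∀ j, G.Adj x (v j) ↔ j ≠ i}

/-- Vertices outside `C` adjacent to all of `C`. -/
def S5 {V : Type*} (G : SimpleGraph V) (v : Fin 5 → V) : Set V :=
  {x | x ∉ Set.range v ∧ ∀ j, G.Adj x (v j)}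

/-! ### Auxiliary machinery -/

/-- Boolean adjacency matrix of the 5-cycle on `Fin 5`. -/
def cycB : Fin 5 → Fin 5 → Bool :=
  ![![false, true, false, false, true],
    ![true, false, true, false, false],
    ![false, true, false, true, false],
    ![false, false, true, false, true],
    ![true, false, false, true, false]]

/-- The neighbourhood pattern `{0, 2, 3}` (the shifted `S23` pattern). -/
def xrow : Fin 5 → Bool := ![true, false, true, true, false]

/-- The shifted `S4` pattern. -/
def s4row : Fin 5 → Bool := ![false, true, true, true, true]

/-- Boolean adjacency matrix on 7 vertices: `0..4` the cycle, `5` a shifted-`S23` vertex `x`,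
`6` a vertex `w` with pattern `p` on the cycle and adjacency `b` to `x`. -/
def Amat (p : Fin 5 → Bool) (b : Bool) : Fin 7 → Fin 7 → Bool :=
  ![![false, true, false, false, true, true, p 0],
    ![true, false, true, false, false, false, p 1],
    ![false, true, false, true, false, true, p 2],
    ![false, false, true, false, true, true, p 3],
    ![true, false, false, true, false, false, p 4],
    ![true, false, true, true, false, false, b],
    ![p 0, p 1, p 2, p 3, p 4, b, false]]

/-- Boolean adjacency of the targets: `true ↦ P₅`, `false ↦ chair`. -/
def tgt : Bool → Fin 5 → Fin 5 → Bool := fun t a c =>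
  if t then decide ((a : ℕ) + 1 = (c : ℕ) ∨ (c : ℕ) + 1 = (a : ℕ))
  else ![![false, true, false, false, false],
         ![true, false, true, false, false],
         ![false, true, false, true, true],
         ![false, false, true, false, false],
         ![false, false, true, false, false]] a c

def witT : Nat → Bool → Option (Bool × (Fin 5 → Fin 7))
  | 1, false => some (true, ![2,3,4,0,6])
  | 1, true => some (true, ![2,3,4,0,6])
  | 2, false => some (true, ![3,4,0,1,6])
  | 2, true => some (true, ![1,6,5,3,4])
  | 3, false => some (true, ![2,3,4,0,6])
  | 3, true => some (true, ![1,6,5,3,4])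
  | 4, false => some (true, ![0,4,3,2,6])
  | 4, true => some (true, ![0,4,3,2,6])
  | 5, false => some (false, ![3,4,0,1,6])
  | 5, true => some (false, ![3,4,0,1,6])
  | 6, false => some (true, ![0,4,3,2,6])
  | 6, true => some (true, ![0,4,3,2,6])
  | 7, true => some (true, ![1,6,5,3,4])
  | 8, false => some (true, ![0,1,2,3,6])
  | 8, true => some (true, ![0,1,2,3,6])
  | 9, false => some (false, ![1,2,3,4,6])
  | 9, true => some (false, ![1,2,3,4,6])
  | 10, false => some (false, ![0,4,3,2,6])
  | 10, true => some (false, ![0,4,3,2,6])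
  | 11, false => some (false, ![1,6,3,4,5])
  | 12, false => some (true, ![1,0,4,3,6])
  | 12, true => some (true, ![1,0,4,3,6])
  | 14, false => some (true, ![4,0,5,2,6])
  | 15, false => some (false, ![1,6,3,4,5])
  | 16, false => some (true, ![1,2,3,4,6])
  | 16, true => some (true, ![1,2,3,4,6])
  | 17, false => some (true, ![1,2,3,4,6])
  | 17, true => some (true, ![1,2,3,4,6])
  | 18, false => some (true, ![1,6,4,3,5])
  | 18, true => some (false, ![2,3,4,0,6])
  | 19, false => some (true, ![1,6,4,3,5])
  | 20, false => some (false, ![0,1,2,3,6])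
  | 20, true => some (false, ![0,1,2,3,6])
  | 21, false => some (false, ![3,5,0,1,6])
  | 22, false => some (true, ![1,6,4,3,5])
  | 23, false => some (true, ![1,6,4,3,5])
  | 24, false => some (true, ![0,1,2,3,6])
  | 24, true => some (true, ![0,1,2,3,6])
  | 25, true => some (true, ![1,2,5,6,4])
  | 26, false => some (true, ![2,5,0,4,6])
  | 27, false => some (true, ![4,6,1,2,5])
  | 28, false => some (true, ![1,0,5,3,6])
  | 29, false => some (false, ![4,6,2,1,5])
  | _, _ => none

def enc (p : Fin 5 → Bool) : ℕ :=
  (if p 0 then 1 else 0) + (if p 1 then 2 else 0) + (if p 2 then 4 else 0) +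
    (if p 3 then 8 else 0) + (if p 4 then 16 else 0)

def Wit (p : Fin 5 → Bool) (b : Bool) : Option (Bool × (Fin 5 → Fin 7)) :=
  witT (enc p) b

def check (p : Fin 5 → Bool) (b : Bool) : Bool :=
  match Wit p b with
  | none => true
  | some (t, f) =>
      decide (Function.Injective f) && decide (∀ a c, Amat p b (f a) (f c) = tgt t a c)

lemma S_ok : ∀ (p : Fin 5 → Bool) (b : Bool), check p b = true := by decide

lemma S3 : ∀ p : Fin 5 → Bool,
    p ≠ xrow → p ≠ s4row → p ≠ (fun _ => true) → p ≠ (fun _ => false) →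
    Wit p true = none → Wit p false ≠ none := by decide

lemma cyc_iff : ∀ a c : Fin 5, cycle5.Adj a c ↔ cycB a c = true := by
  simp only [cycle5, SimpleGraph.fromRel_adj]; decide

lemma cycB_shift : ∀ i a c : Fin 5, cycB (i + a) (i + c) = cycB a c := by decide

lemma tgt_true : ∀ a c : Fin 5, tgt true a c = true ↔ (SimpleGraph.pathGraph 5).Adj a c := by
  simp only [SimpleGraph.pathGraph_adj]; decide

lemma tgt_false : ∀ a c : Fin 5, tgt false a c = true ↔ chair.Adj a c := by
  simp only [chair, SimpleGraph.fromRel_adj]; decide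

lemma fin5_add_sub : ∀ i j : Fin 5, i + (j - i) = j := by decide

lemma shift1 : ∀ i j : Fin 5, xrow (j - i) = true ↔ (j = i - 2 ∨ j = i ∨ j = i + 2) := by decide

lemma shift2 : ∀ i j : Fin 5, s4row (j - i) = true ↔ j ≠ i := by decide

lemma shift3 : ∀ i k : Fin 5,
    (i + k = i - 2 ∨ i + k = i ∨ i + k = i + 2) ↔ xrow k = true := by decide

lemma shift4 : ∀ i a c : Fin 5, i + a = i + c → a = c := by decide

lemma core {V : Type*} (G : SimpleGraph V)
    (hP5 : ¬ HasInducedCopy (SimpleGraph.pathGraph 5) G)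
    (hchair : ¬ HasInducedCopy chair G)
    (u : Fin 5 → V) (hui : Function.Injective u)
    (hUadj : ∀ a c, G.Adj (u a) (u c) ↔ cycB a c = true)
    (x w : V) (hxu : ∀ k, x ≠ u k) (hwu : ∀ k, w ≠ u k) (hwx : w ≠ x)
    (hxadj : ∀ k, G.Adj x (u k) ↔ xrow k = true)
    (p : Fin 5 → Bool) (hp : ∀ k, G.Adj w (u k) ↔ p k = true)
    (b : Bool) (hb : G.Adj w x ↔ b = true)
    (t : Bool) (f : Fin 5 → Fin 7) (hW : Wit p b = some (t, f)) : False := by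
  have hxc : ∀ k, G.Adj (u k) x ↔ xrow k = true := fun k => (G.adj_comm _ _).trans (hxadj k)
  have hpc : ∀ k, G.Adj (u k) w ↔ p k = true := fun k => (G.adj_comm _ _).trans (hp k)
  have hb' : G.Adj x w ↔ b = true := (G.adj_comm _ _).trans hb
  set g : Fin 7 → V := ![u 0, u 1, u 2, u 3, u 4, x, w] with hgdef
  have hg : Function.Injective g := by
    intro a c h
    fin_cases a <;> fin_cases c <;>
      first
        | rfl
        | exact absurd (hui h) (by decide)
        | exact ((hxu _) h.symm).elim
        | exact ((hxu _) h).elim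
        | exact ((hwu _) h.symm).elim
        | exact ((hwu _) h).elim
        | exact (hwx h.symm).elim
        | exact (hwx h).elim
  have hA : ∀ a c, G.Adj (g a) (g c) ↔ Amat p b a c = true := by
    intro a c
    fin_cases a <;> fin_cases c <;>
      first
        | exact iff_of_false (G.loopless.irrefl _) Bool.false_ne_true
        | exact hUadj _ _
        | exact hxadj _
        | exact hxc _
        | exact hp _
        | exact hpc _
        | exact hb
        | exact hb'
  have hchk := S_ok p b
  unfold check at hchk
  rw [hW] at hchk
  rw [Bool.and_eq_true, decide_eq_true_eq, decide_eq_true_eq] at hchk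
  obtain ⟨hfi, hfm⟩ := hchk
  cases t with
  | true =>
      exact hP5 ⟨g ∘ f, hg.comp hfi, fun a c =>
        (hA (f a) (f c)).trans (by rw [hfm a c]; exact tgt_true a c)⟩
  | false =>
      exact hchair ⟨g ∘ f, hg.comp hfi, fun a c =>
        (hA (f a) (f c)).trans (by rw [hfm a c]; exact tgt_false a c)⟩

theorem stmt9 {V : Type*} [Fintype V] (G : SimpleGraph V)
    (hP5 : ¬ HasInducedCopy (SimpleGraph.pathGraph 5) G)
    (hchair : ¬ HasInducedCopy chair G)
    (v : Fin 5 → V) (hC : IsInducedC5 G v) (i : Fin 5)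
    (w : V) (hw : w ∉ S23 G v i ∪ S4 G v i ∪ S5 G v)
    (hwC : ∃ j, G.Adj w (v j)) :
    (∀ x ∈ S23 G v i, G.Adj w x) ∨ (∀ x ∈ S23 G v i, ¬ G.Adj w x) := by
  classical
  obtain ⟨hvi, hva⟩ := hC
  simp only [Set.mem_union, not_or] at hw
  obtain ⟨⟨hw23, hw4⟩, hw5⟩ := hw
  by_cases hwr : w ∈ Set.range v
  · obtain ⟨j, rfl⟩ := hwr
    by_cases hj : j = i - 2 ∨ j = i ∨ j = i + 2
    · left; intro x hx; exact ((hx.2 j).mpr hj).symm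
    · right; intro x hx hadj; exact hj ((hx.2 j).mp hadj.symm)
  · set u : Fin 5 → V := fun k => v (i + k) with hudef
    have hui : Function.Injective u := fun a c h => shift4 i a c (hvi h)
    have hUadj : ∀ a c, G.Adj (u a) (u c) ↔ cycB a c = true := by
      intro a c
      exact (hva _ _).trans ((cyc_iff _ _).trans (by rw [cycB_shift]))
    have hwu : ∀ k, w ≠ u k := fun k h => hwr ⟨i + k, h.symm⟩
    set p : Fin 5 → Bool := fun k => decide (G.Adj w (u k)) with hpdef
    have hp : ∀ k, G.Adj w (u k) ↔ p k = true := fun k => decide_eq_true_iff.symm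
    have hpv' : ∀ j : Fin 5, G.Adj w (v j) ↔ p (j - i) = true := by
      intro j
      have h1 := hp (j - i)
      have h2 : u (j - i) = v j := by rw [hudef]; simp only; rw [fin5_add_sub]
      rwa [h2] at h1
    have hall1 : p ≠ xrow := by
      intro he
      exact hw23 ⟨hwr, fun j => (hpv' j).trans (by rw [he]; exact shift1 i j)⟩
    have hall2 : p ≠ s4row := by
      intro he
      exact hw4 ⟨hwr, fun j => (hpv' j).trans (by rw [he]; exact shift2 i j)⟩
    have hall3 : p ≠ (fun _ => true) := by
      intro he
      exact hw5 ⟨hwr, fun j => (hpv' j).mpr (by rw [he])⟩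
    have hall4 : p ≠ (fun _ => false) := by
      intro he
      obtain ⟨j, hj⟩ := hwC
      have := (hpv' j).mp hj
      rw [he] at this
      exact Bool.false_ne_true this
    rcases hWt : Wit p true with _ | ⟨t, f⟩
    · left
      intro x hx
      by_contra hnadj
      have hWf := S3 p hall1 hall2 hall3 hall4 hWt
      rcases hWf2 : Wit p false with _ | ⟨t, f⟩
      · exact hWf hWf2
      · have hwx : w ≠ x := fun h => hw23 (h ▸ hx)
        have hxu : ∀ k, x ≠ u k := fun k h => hx.1 ⟨i + k, h.symm⟩
        have hxadj : ∀ k, G.Adj x (u k) ↔ xrow k = true := fun k =>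
          (hx.2 (i + k)).trans (shift3 i k)
        exact core G hP5 hchair u hui hUadj x w hxu hwu hwx hxadj p hp false
          (iff_of_false hnadj Bool.false_ne_true) t f hWf2
    · right
      intro x hx hadj
      have hwx : w ≠ x := fun h => hw23 (h ▸ hx)
      have hxu : ∀ k, x ≠ u k := fun k h => hx.1 ⟨i + k, h.symm⟩
      have hxadj : ∀ k, G.Adj x (u k) ↔ xrow k = true := fun k =>
        (hx.2 (i + k)).trans (shift3 i k)
      exact core G hP5 hchair u hui hUadj x w hxu hwu hwx hxadj p hp true
        (iff_of_true hadj rfl) t f hWt
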